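/- For every n ≥ 1 there exists a monotone Boolean network f : {0,1}^n → {0,1}^n (so G(f) has only positive arcs) and states x, y such that y is a fixed point of f reachable from x in the asynchronous graph Γ(f), but every path from x to y in Γ(f) has length at least 2^{⌊n/2⌋}. -/

import Mathlib

/-- State of a Boolean network with `n` components. -/
abbrev BState (n : ℕ) := Fin n → Bool

/-- Positive arc `j → i` in the global interaction graph `G(f)`:
the discrete partial derivative `f_{ij}` is positive at some state. -/
def posArc {n : ℕ} (f : BState n → BState n) (j i : Fin n) : Prop :=
  ∃ x : BState n, f (Function.update x j true) i = true ∧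
    f (Function.update x j false) i = false

/-- Negative arc `j → i` in `G(f)`:
the discrete partial derivative `f_{ij}` is negative at some state. -/
def negArc {n : ℕ} (f : BState n → BState n) (j i : Fin n) : Prop :=
  ∃ x : BState n, f (Function.update x j true) i = false ∧
    f (Function.update x j false) i = true

/-- Unsigned arc `j → i` in the interaction graph: `f_i` depends on `x_j`. -/
def arc {n : ℕ} (f : BState n → BState n) (j i : Fin n) : Prop :=
  posArc f j i ∨ negArc f j i

/-- Arc of given sign (`true` = positive, `false` = negative). -/
def signedArc {n : ℕ} (f : BState n → BState n) (ε : Bool) (j i : Fin n) : Prop :=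
  if ε then posArc f j i else negArc f j i

/-- A signed cycle of `G(f)`: vertices `vert 0 → vert 1 → ⋯ → vert len → vert 0`
(so the length is `len + 1`), pairwise distinct, each consecutive arc present in
`G(f)` with sign `sign k`. -/
structure SignedCycle {n : ℕ} (f : BState n → BState n) where
  len : ℕ
  vert : Fin (len + 1) → Fin n
  inj : Function.Injective vert
  sign : Fin (len + 1) → Bool
  arcs : ∀ k : Fin (len + 1), signedArc f (sign k) (vert k) (vert (k + 1))

/-- Length (number of arcs) of a signed cycle. -/
def SignedCycle.length {n : ℕ} {f : BState n → BState n} (C : SignedCycle f) : ℕ :=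
  C.len + 1

/-- A cycle is positive iff it has an even number of negative arcs. -/
def SignedCycle.Positive {n : ℕ} {f : BState n → BState n} (C : SignedCycle f) : Prop :=
  Even (Finset.univ.filter (fun k => C.sign k = false)).card

/-- A cycle is negative iff it has an odd number of negative arcs. -/
def SignedCycle.Negative {n : ℕ} {f : BState n → BState n} (C : SignedCycle f) : Prop :=
  Odd (Finset.univ.filter (fun k => C.sign k = false)).card

/-- An unsigned cycle of the interaction graph. -/
structure UCycle {n : ℕ} (f : BState n → BState n) where
  len : ℕ
  vert : Fin (len + 1) → Fin n
  inj : Function.Injective vert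
  arcs : ∀ k : Fin (len + 1), arc f (vert k) (vert (k + 1))

/-- One step of the asynchronous dynamics `Γ(f)`. -/
def asyncStep {n : ℕ} (f : BState n → BState n) (x y : BState n) : Prop :=
  ∃ i : Fin n, f x i ≠ x i ∧ y = Function.update x i (f x i)

/-- There is a path of length `L` from `x` to `y` in `Γ(f)`. -/
def asyncPath {n : ℕ} (f : BState n → BState n) (x y : BState n) (L : ℕ) : Prop :=
  ∃ p : ℕ → BState n, p 0 = x ∧ p L = y ∧ ∀ k < L, asyncStep f (p k) (p (k + 1))

set_option linter.dupNamespace false in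
section
namespace BN


/-- Infinite-coordinate Boolean states. -/
abbrev S := ℕ → Bool

def flipc (u : S) (i : ℕ) : S := Function.update u i (!(u i))

/-- asynchronous step over ℕ-indexed states -/
def stepR (f : S → S) (u v : S) : Prop :=
  ∃ i, f u i ≠ u i ∧ v = Function.update u i (f u i)

lemma flipc_apply (u : S) (i j : ℕ) :
    flipc u i j = if j = i then !(u i) else u j := by
  simp [flipc, Function.update]

@[simp] lemma flipc_self (u : S) (i : ℕ) : flipc u i i = !(u i) := by
  simp [flipc]

lemma flipc_ne (u : S) {i j : ℕ} (h : j ≠ i) : flipc u i j = u j := by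
  simp [flipc_apply, h]

@[simp] lemma flipc_flipc (u : S) (i : ℕ) : flipc (flipc u i) i = u := by
  funext j
  by_cases h : j = i
  · subst h; simp
  · rw [flipc_ne _ h, flipc_ne _ h]

lemma stepR_iff (f : S → S) (u v : S) :
    stepR f u v ↔ ∃ j, v = flipc u j ∧ f u j ≠ u j := by
  constructor
  · rintro ⟨i, hne, hv⟩
    refine ⟨i, ?_, hne⟩
    rw [hv]
    funext j
    by_cases h : j = i
    · subst h
      simp only [Function.update_self, flipc_self]
      cases hu : u j <;> cases hf : f u j <;> simp_all
    · rw [Function.update_of_ne h, flipc_ne _ h]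
  · rintro ⟨j, hv, hne⟩
    refine ⟨j, hne, ?_⟩
    rw [hv]
    funext k
    by_cases h : k = j
    · subst h
      simp only [Function.update_self, flipc_self]
      cases hu : u k <;> cases hf : f u k <;> simp_all
    · rw [Function.update_of_ne h, flipc_ne _ h]

/-- swap of the top pair of coordinates of a level-`m` network -/
def swp (m : ℕ) (i : ℕ) : ℕ :=
  if i = 2*m - 2 then 2*m - 1 else if i = 2*m - 1 then 2*m - 2 else i

lemma swp_swp (m i : ℕ) : swp m (swp m i) = i := by
  unfold swp
  rcases Nat.eq_zero_or_pos m with hm | hm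
  · subst hm; simp only [Nat.mul_zero]; split_ifs <;> omega
  · have : 2*m - 2 ≠ 2*m - 1 := by omega
    split_ifs <;> omega

lemma swp_lt {m i : ℕ} (hm : 1 ≤ m) : swp m i < 2*m ↔ i < 2*m := by
  unfold swp
  split_ifs <;> omega

/-- The backward-deterministic chain specification. -/
structure Spec (m : ℕ) where
  f : S → S
  T : ℕ
  p : ℕ → S
  c : ℕ → ℕ
  mono : Monotone f
  hm : 1 ≤ m
  hT : T = 2 * 2 ^ m - 2
  highId : ∀ u i, 2*m ≤ i → f u i = u i
  plow : ∀ t, t ≤ T → ∀ i, 2*m ≤ i → p t i = false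
  clow : ∀ t, t < T → c t < 2*m
  pstep : ∀ t, t < T → p (t+1) = flipc (p t) (c t)
  edges : ∀ t, t < T → f (p t) (c t) ≠ p t (c t)
  bd : ∀ t j, t + 1 ≤ T → j ≠ c t → f (flipc (p (t+1)) j) j = (flipc (p (t+1)) j) j
  np : ∀ j, f (flipc (p 0) j) j = (flipc (p 0) j) j
  fixy : f (p T) = p T
  notle : ∀ t, 1 ≤ t → t ≤ T → ¬ (p t ≤ p 0)
  lastdown : p T ≤ p (T-1)
  syx : (fun i => p T (swp m i)) = p 0


def base : Spec 1 where
  f := fun u i => if i = 0 then u 0 || u 1 else if i = 1 then false else u i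
  T := 2
  p := fun t i => if t = 0 then decide (i = 1) else if t = 1 then decide (i < 2) else decide (i = 0)
  c := fun t => t
  mono := by
    intro u v h i
    have h0 := h 0; have h1 := h 1; have hi := h i
    dsimp only
    split_ifs
    · revert h0 h1; cases u 0 <;> cases u 1 <;> cases v 0 <;> cases v 1 <;> simp_all
    · exact le_refl false
    · exact hi
  hm := le_refl 1
  hT := by norm_num
  highId := by intro u i hi; rw [if_neg (by omega), if_neg (by omega)]
  plow := by
    intro t ht i hi
    split_ifs <;> simp <;> omega
  clow := by intro t ht; simpa using by omega
  pstep := by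
    intro t ht
    interval_cases t <;> (funext i; rw [flipc_apply]) <;>
      rcases i with _ | _ | i <;> simp
  edges := by intro t ht; interval_cases t <;> simp
  bd := by
    intro t j ht hj
    have ht' : t ≤ 1 := by omega
    replace hj : j ≠ t := hj
    interval_cases t <;> rcases j with _ | _ | j <;>
      simp_all [flipc_apply]
  np := by
    intro j
    rcases j with _ | _ | j <;> simp [flipc_apply]
  fixy := by
    funext i
    rcases i with _ | _ | i <;> simp
  notle := by
    intro t h1 h2 hle
    interval_cases t <;> exact absurd (hle 0) (by decide)
  lastdown := by
    intro i
    rcases i with _ | _ | i <;> simp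
  syx := by
    funext i
    simp only [swp]
    rcases i with _ | _ | i <;> norm_num


/-! ### Composite construction helpers -/

/-- truncation to low coordinates -/
def trunc (M : ℕ) (u : S) : S := fun i => if i < M then u i else false

/-- extension of a low state by two top coordinates -/
def ext (M : ℕ) (u : S) (a b : Bool) : S :=
  fun i => if i < M then u i else if i = M then a else if i = M + 1 then b else false

/-- low-supported states -/
def Low (M : ℕ) (u : S) : Prop := ∀ i, M ≤ i → u i = false

lemma ext_lt {M : ℕ} (u : S) (a b : Bool) {i : ℕ} (h : i < M) : ext M u a b i = u i := by
  simp [ext, h]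

lemma ext_M {M : ℕ} (u : S) (a b : Bool) : ext M u a b M = a := by
  simp [ext]

lemma ext_M1 {M : ℕ} (u : S) (a b : Bool) : ext M u a b (M+1) = b := by
  simp [ext]

lemma ext_high {M : ℕ} (u : S) (a b : Bool) {i : ℕ} (h : M + 2 ≤ i) : ext M u a b i = false := by
  simp only [ext]
  rw [if_neg (by omega), if_neg (by omega), if_neg (by omega)]

lemma trunc_ext {M : ℕ} (u : S) (a b : Bool) : trunc M (ext M u a b) = trunc M u := by
  funext i
  simp only [trunc, ext]
  split_ifs <;> rfl

lemma trunc_of_low {M : ℕ} {u : S} (h : Low M u) : trunc M u = u := by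
  funext i
  simp only [trunc]
  split_ifs with hi
  · rfl
  · exact (h i (by omega)).symm

lemma low_flipc {M : ℕ} {u : S} (h : Low M u) {j : ℕ} (hj : j < M) : Low M (flipc u j) := by
  intro i hi
  rw [flipc_ne _ (by omega)]
  exact h i hi

lemma low_swp {m : ℕ} (hm : 1 ≤ m) {u : S} (h : Low (2*m) u) :
    Low (2*m) (fun k => u (swp m k)) := by
  intro i hi
  exact h _ (by have := (swp_lt (i := i) hm); omega)

lemma flipc_ext_low {M : ℕ} (u : S) (a b : Bool) {j : ℕ} (hj : j < M) :
    flipc (ext M u a b) j = ext M (flipc u j) a b := by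
  funext i
  by_cases hij : i = j
  · subst hij
    rw [flipc_self, ext_lt _ _ _ hj, ext_lt _ _ _ hj, flipc_self]
  · rw [flipc_ne _ hij]
    by_cases hi : i < M
    · rw [ext_lt _ _ _ hi, ext_lt _ _ _ hi, flipc_ne _ hij]
    · simp only [ext, if_neg hi]

lemma flipc_ext_M {M : ℕ} (u : S) (a b : Bool) :
    flipc (ext M u a b) M = ext M u (!a) b := by
  funext i
  by_cases hij : i = M
  · subst hij; rw [flipc_self, ext_M, ext_M]
  · rw [flipc_ne _ hij]
    by_cases hi : i < M
    · rw [ext_lt _ _ _ hi, ext_lt _ _ _ hi]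
    · simp only [ext, if_neg hi, if_neg hij]

lemma flipc_ext_M1 {M : ℕ} (u : S) (a b : Bool) :
    flipc (ext M u a b) (M+1) = ext M u a (!b) := by
  funext i
  by_cases hij : i = M + 1
  · subst hij; rw [flipc_self, ext_M1, ext_M1]
  · rw [flipc_ne _ hij]
    by_cases hi : i < M
    · rw [ext_lt _ _ _ hi, ext_lt _ _ _ hi]
    · by_cases hiM : i = M
      · subst hiM; rw [ext_M, ext_M]
      · simp only [ext, if_neg hi, if_neg hiM, if_neg hij]

lemma swp_inj {m : ℕ} {i j : ℕ} (h : swp m i = swp m j) : i = j := by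
  have := congrArg (swp m) h
  rwa [swp_swp, swp_swp] at this

lemma flipc_swp (m : ℕ) (u : S) (j : ℕ) :
    flipc (fun k => u (swp m k)) j = fun k => flipc u (swp m j) (swp m k) := by
  funext k
  rw [flipc_apply, flipc_apply]
  by_cases h : k = j
  · subst h; simp
  · rw [if_neg h, if_neg (fun hh => h (swp_inj hh))]

lemma comp_swp_swp (m : ℕ) (u : S) : (fun k => (fun k' => u (swp m k')) (swp m k)) = u := by
  funext k; simp [swp_swp]


section Comp
variable {m : ℕ} (A : Spec m)

/-- guard for the second rail of the new top pair -/
def Dfun (s : S) : Bool :=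
  decide (∃ t : Fin (A.T + 1), 1 ≤ t.1 ∧
    ∀ i, i < 2*m → (A.p t.1 (swp m i) = true → s i = true))

/-- guard for the first rail of the new top pair -/
def Efun (s : S) : Bool :=
  decide (∀ i, i < 2*m → (A.p A.T i = true → s i = true))

/-- the composite network on `2*(m+1)` coordinates -/
def compF : S → S := fun s i =>
  if i < 2*m then
    ((s (2*m+1) && A.f (trunc (2*m) s) i) ||
      (s (2*m) && A.f (fun k => trunc (2*m) s (swp m k)) (swp m i)))
  else if i = 2*m then (s (2*m) || (s (2*m+1) && Efun A s))
  else if i = 2*m+1 then (s (2*m+1) && Dfun A s)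
  else s i

/-- the composite walk -/
def compP : ℕ → S := fun t =>
  if t ≤ A.T then ext (2*m) (A.p t) false true
  else if t = A.T + 1 then ext (2*m) (A.p A.T) true true
  else ext (2*m) (fun k => A.p (t - (A.T+2)) (swp m k)) true false

/-- the composite flip coordinates -/
def compC : ℕ → ℕ := fun t =>
  if t < A.T then A.c t
  else if t = A.T then 2*m
  else if t = A.T + 1 then 2*m + 1
  else swp m (A.c (t - (A.T + 2)))

lemma compF_low {i : ℕ} (h : i < 2*m) (s : S) :
    compF A s i = ((s (2*m+1) && A.f (trunc (2*m) s) i) ||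
      (s (2*m) && A.f (fun k => trunc (2*m) s (swp m k)) (swp m i))) := by
  simp [compF, h]

lemma compF_M (s : S) : compF A s (2*m) = (s (2*m) || (s (2*m+1) && Efun A s)) := by
  simp [compF]

lemma compF_M1 (s : S) : compF A s (2*m+1) = (s (2*m+1) && Dfun A s) := by
  have h1 : ¬ (2*m+1 < 2*m) := by omega
  have h2 : ¬ (2*m+1 = 2*m) := by omega
  simp [compF, h1, h2]

lemma compF_high {i : ℕ} (h : 2*m + 2 ≤ i) (s : S) : compF A s i = s i := by
  simp only [compF]
  rw [if_neg (by omega), if_neg (by omega), if_neg (by omega)]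

/-- evaluation at extended low-supported states, low coordinates -/
lemma compF_ext_low {u : S} (hu : Low (2*m) u) (a b : Bool) {i : ℕ} (h : i < 2*m) :
    compF A (ext (2*m) u a b) i
      = ((b && A.f u i) || (a && A.f (fun k => u (swp m k)) (swp m i))) := by
  rw [compF_low A h, ext_M, ext_M1, trunc_ext, trunc_of_low hu]

lemma Efun_ext (u : S) (a b : Bool) :
    Efun A (ext (2*m) u a b) = Efun A u := by
  simp only [Efun]
  congr 1
  apply propext
  constructor <;> intro h i hi hp
  · have := h i hi hp; rwa [ext_lt _ _ _ hi] at this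
  · rw [ext_lt _ _ _ hi]; exact h i hi hp

lemma Dfun_ext (u : S) (a b : Bool) :
    Dfun A (ext (2*m) u a b) = Dfun A u := by
  simp only [Dfun]
  congr 1
  apply propext
  constructor <;> rintro ⟨t, ht, h⟩ <;> refine ⟨t, ht, fun i hi hp => ?_⟩
  · have := h i hi hp; rwa [ext_lt _ _ _ hi] at this
  · rw [ext_lt _ _ _ hi]; exact h i hi hp

end Comp

lemma bool_le_iff (x y : Bool) : x ≤ y ↔ (x = true → y = true) := by
  cases x <;> cases y <;> simp

section Comp2
variable {m : ℕ} (A : Spec m)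

lemma two_le_T : 2 ≤ A.T := by
  have h : 2 ≤ 2 ^ m := by
    calc 2 = 2 ^ 1 := by norm_num
    _ ≤ 2 ^ m := Nat.pow_le_pow_right (by norm_num) A.hm
  have := A.hT
  omega

lemma plow' {t : ℕ} (h : t ≤ A.T) : Low (2*m) (A.p t) := fun i hi => A.plow t h i hi

lemma x_eq : (fun k => A.p A.T (swp m k)) = A.p 0 := A.syx

lemma y_eq : (fun k => A.p 0 (swp m k)) = A.p A.T := by
  funext k
  have := congrFun A.syx (swp m k)
  rw [← this, swp_swp]

lemma Efun_y : Efun A (A.p A.T) = true := by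
  simp only [Efun, decide_eq_true_eq]
  exact fun i _ h => h

lemma Dfun_y : Dfun A (A.p A.T) = false := by
  simp only [Dfun, decide_eq_false_iff_not]
  rintro ⟨t, ht1, h⟩
  refine A.notle t.1 ht1 (by omega) (fun i => ?_)
  rw [bool_le_iff]
  intro hi
  by_cases hil : i < 2*m
  · have h2 := h (swp m i) ((swp_lt A.hm).mpr hil)
    rw [swp_swp] at h2
    have h3 := h2 hi
    have h4 := congrFun A.syx i
    rw [h4] at h3
    exact h3
  · rw [A.plow t.1 (by omega) i (by omega)] at hi
    exact absurd hi (by simp)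

lemma Dfun_p {s : ℕ} (h1 : 1 ≤ s) (h2 : s ≤ A.T) :
    Dfun A (fun k => A.p s (swp m k)) = true := by
  simp only [Dfun, decide_eq_true_eq]
  exact ⟨⟨s, by omega⟩, h1, fun i _ h => h⟩

lemma Efun_mono : Monotone (Efun A) := by
  intro s s' h
  rw [bool_le_iff]
  simp only [Efun, decide_eq_true_eq]
  intro hs i hi hp
  have := h i
  rw [bool_le_iff] at this
  exact this (hs i hi hp)

lemma Dfun_mono : Monotone (Dfun A) := by
  intro s s' h
  rw [bool_le_iff]
  simp only [Dfun, decide_eq_true_eq]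
  rintro ⟨t, ht, hs⟩
  refine ⟨t, ht, fun i hi hp => ?_⟩
  have := h i
  rw [bool_le_iff] at this
  exact this (hs i hi hp)

lemma trunc_mono (M : ℕ) : Monotone (trunc M) := by
  intro s s' h i
  simp only [trunc]
  split_ifs
  · exact h i
  · exact le_refl false

lemma comp_mono : Monotone (compF A) := by
  intro s s' h i
  by_cases h1 : i < 2*m
  · rw [compF_low A h1, compF_low A h1]
    have hf1 := A.mono (trunc_mono (2*m) h) i
    have hsw : (fun k => trunc (2*m) s (swp m k)) ≤ (fun k => trunc (2*m) s' (swp m k)) :=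
      fun k => trunc_mono (2*m) h (swp m k)
    have hf2 := A.mono hsw (swp m i)
    have ha := h (2*m); have hb := h (2*m+1)
    rw [bool_le_iff] at *
    intro hor
    simp only [Bool.or_eq_true, Bool.and_eq_true] at hor ⊢
    rcases hor with ⟨c1, c2⟩ | ⟨c1, c2⟩
    · exact Or.inl ⟨hb c1, hf1 c2⟩
    · exact Or.inr ⟨ha c1, hf2 c2⟩
  · by_cases h2 : i = 2*m
    · subst h2
      rw [compF_M, compF_M]
      have ha := h (2*m); have hb := h (2*m+1)
      have he := Efun_mono A h
      rw [bool_le_iff] at *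
      intro hor
      simp only [Bool.or_eq_true, Bool.and_eq_true] at hor ⊢
      rcases hor with c1 | ⟨c1, c2⟩
      · exact Or.inl (ha c1)
      · exact Or.inr ⟨hb c1, he c2⟩
    · by_cases h3 : i = 2*m+1
      · subst h3
        rw [compF_M1, compF_M1]
        have hb := h (2*m+1)
        have hd := Dfun_mono A h
        rw [bool_le_iff] at *
        intro hand
        simp only [Bool.and_eq_true] at hand ⊢
        exact ⟨hb hand.1, hd hand.2⟩
      · rw [compF_high A (by omega), compF_high A (by omega)]
        exact h i

end Comp2

lemma swp_succ (m i : ℕ) :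
    swp (m+1) i = if i = 2*m then 2*m+1 else if i = 2*m+1 then 2*m else i := by
  simp only [swp]
  rw [show 2*(m+1)-2 = 2*m from by omega, show 2*(m+1)-1 = 2*m+1 from by omega]

section Comp3
variable {m : ℕ} (A : Spec m)

lemma compP_le {t : ℕ} (h : t ≤ A.T) : compP A t = ext (2*m) (A.p t) false true := by
  simp [compP, h]

lemma compP_mid : compP A (A.T+1) = ext (2*m) (A.p A.T) true true := by
  simp only [compP]
  rw [if_neg (by omega)]
  simp

lemma compP_hi {t : ℕ} (h : A.T+2 ≤ t) :
    compP A t = ext (2*m) (fun k => A.p (t - (A.T+2)) (swp m k)) true false := by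
  simp only [compP]
  rw [if_neg (by omega), if_neg (by omega)]

lemma compC_lo {t : ℕ} (h : t < A.T) : compC A t = A.c t := by simp [compC, h]

lemma compC_T : compC A A.T = 2*m := by
  simp only [compC]
  rw [if_neg (by omega)]
  simp

lemma compC_T1 : compC A (A.T+1) = 2*m+1 := by
  simp only [compC]
  rw [if_neg (by omega), if_neg (by omega)]
  simp

lemma compC_hi {t : ℕ} (h : A.T+2 ≤ t) : compC A t = swp m (A.c (t - (A.T+2))) := by
  simp only [compC]
  rw [if_neg (by omega), if_neg (by omega), if_neg (by omega)]

/-- value of `np`-type evaluations: the `σ`-side disjunct at neighbours of `p A.T` -/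
lemma second_disjunct {j : ℕ} (hj : j < 2*m) :
    A.f (fun k => flipc (A.p A.T) j (swp m k)) (swp m j) = !(A.p A.T j) := by
  have e1 : (fun k => flipc (A.p A.T) j (swp m k)) = flipc (A.p 0) (swp m j) := by
    rw [← x_eq A, flipc_swp, swp_swp]
  rw [e1, A.np (swp m j), flipc_self]
  have h4 := congrFun A.syx (swp m j)
  rw [swp_swp] at h4
  rw [← h4]

def comp : Spec (m+1) where
  f := compF A
  T := 2*A.T + 2
  p := compP A
  c := compC A
  mono := comp_mono A
  hm := by omega
  hT := by
    have h1 := A.hT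
    have h2 := two_le_T A
    rw [pow_succ]
    omega
  highId := fun u i hi => compF_high A (by omega) u
  plow := by
    intro t ht i hi
    simp only [compP]
    split_ifs <;> exact ext_high _ _ _ (by omega)
  clow := by
    intro t ht
    simp only [compC]
    split_ifs with h1 h2 h3
    · have := A.clow t h1; omega
    · omega
    · omega
    · have hlt : t - (A.T+2) < A.T := by omega
      have h5 := A.clow _ hlt
      have := (swp_lt (m := m) (i := A.c (t - (A.T+2))) A.hm).mpr h5
      omega
  pstep := by
    intro t ht
    by_cases h1 : t < A.T
    · rw [compP_le A (by omega), compP_le A (by omega), compC_lo A h1,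
        A.pstep t h1, flipc_ext_low _ _ _ (A.clow t h1)]
    · by_cases h2 : t = A.T
      · subst h2
        rw [compP_mid A, compP_le A le_rfl, compC_T, flipc_ext_M]
        norm_num
      · by_cases h3 : t = A.T+1
        · subst h3
          rw [compP_hi A (by omega), compP_mid A, compC_T1, flipc_ext_M1]
          rw [show A.T+1+1-(A.T+2) = 0 from by omega, y_eq A]
          norm_num
        · have h4 : A.T+2 ≤ t := by omega
          rw [compP_hi A (by omega), compP_hi A h4, compC_hi A h4]
          have hc := A.clow (t - (A.T+2)) (by omega)
          rw [flipc_ext_low _ _ _ ((swp_lt A.hm).mpr hc), flipc_swp, swp_swp]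
          rw [show t+1-(A.T+2) = (t - (A.T+2))+1 from by omega,
            A.pstep (t - (A.T+2)) (by omega)]
  edges := by
    intro t ht
    by_cases h1 : t < A.T
    · rw [compC_lo A h1, compP_le A (by omega)]
      have hc := A.clow t h1
      rw [compF_ext_low A (plow' A (by omega)) _ _ hc, ext_lt _ _ _ hc]
      simp only [Bool.true_and, Bool.false_and, Bool.or_false]
      exact A.edges t h1
    · by_cases h2 : t = A.T
      · subst h2
        rw [compC_T, compP_le A le_rfl, compF_M, ext_M, ext_M1, Efun_ext, Efun_y]
        simp
      · by_cases h3 : t = A.T+1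
        · subst h3
          rw [compC_T1, compP_mid A, compF_M1, ext_M1, Dfun_ext, Dfun_y]
          simp
        · have h4 : A.T+2 ≤ t := by omega
          set s := t - (A.T+2) with hs
          have hsT : s < A.T := by omega
          have hc := A.clow s hsT
          rw [compC_hi A h4, compP_hi A h4, ← hs]
          have hlow : Low (2*m) (fun k => A.p s (swp m k)) :=
            low_swp A.hm (plow' A (by omega))
          rw [compF_ext_low A hlow _ _ ((swp_lt A.hm).mpr hc),
            ext_lt _ _ _ ((swp_lt A.hm).mpr hc)]
          simp only [Bool.false_and, Bool.true_and, Bool.false_or]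
          rw [comp_swp_swp, swp_swp]
          exact A.edges s hsT
  bd := by
    intro t j ht hj
    by_cases hjh : 2*m+2 ≤ j
    · exact compF_high A hjh _
    by_cases h1 : t < A.T
    · -- region A : p'(t+1) = ext (A.p (t+1)) false true
      rw [compC_lo A h1] at hj
      rw [compP_le A (by omega)]
      by_cases hjl : j < 2*m
      · rw [flipc_ext_low _ _ _ hjl,
          compF_ext_low A (low_flipc (plow' A (by omega)) hjl) _ _ hjl,
          ext_lt _ _ _ hjl]
        simp only [Bool.true_and, Bool.false_and, Bool.or_false]
        exact A.bd t j (by omega) hj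
      · by_cases hjm : j = 2*m
        · subst hjm
          rw [flipc_ext_M, compF_M, ext_M]
          simp
        · have hjm1 : j = 2*m+1 := by omega
          subst hjm1
          rw [flipc_ext_M1, compF_M1, ext_M1]
          simp
    · by_cases h2 : t = A.T
      · -- region B : p'(t+1) = ext (A.p A.T) true true, c' t = 2*m
        subst h2
        rw [compC_T] at hj
        rw [compP_mid A]
        by_cases hjl : j < 2*m
        · rw [flipc_ext_low _ _ _ hjl,
            compF_ext_low A (low_flipc (plow' A le_rfl) hjl) _ _ hjl,
            ext_lt _ _ _ hjl]
          simp only [Bool.true_and]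
          rw [second_disjunct A hjl, flipc_self]
          by_cases hcj : j = A.c (A.T - 1)
          · -- the exceptional coordinate: last step of the inner walk
            have hTT : A.T - 1 + 1 = A.T := by have := two_le_T A; omega
            have hstep := A.pstep (A.T-1) (by have := two_le_T A; omega)
            rw [hTT, ← hcj] at hstep
            have hyval : A.p A.T j = false := by
              have hld := A.lastdown j
              rw [hstep, flipc_self] at hld ⊢
              cases hpv : A.p (A.T-1) j
              · exfalso
                rw [hpv, bool_le_iff] at hld
                exact absurd (hld rfl) (by simp)
              · simp
            rw [hyval]
            simp
          · have hbd := A.bd (A.T-1) j (by have := two_le_T A; omega) hcj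
            have hTT : A.T - 1 + 1 = A.T := by have := two_le_T A; omega
            rw [hTT] at hbd
            rw [hbd, flipc_self]
            simp
        · by_cases hjm : j = 2*m
          · exact absurd hjm hj
          · have hjm1 : j = 2*m+1 := by omega
            subst hjm1
            rw [flipc_ext_M1, compF_M1, ext_M1]
            simp
      · by_cases h3 : t = A.T+1
        · -- region C : p'(t+1) = ext (A.p A.T) true false, c' t = 2*m+1
          subst h3
          rw [compC_T1] at hj
          rw [compP_hi A (by omega), show A.T+1+1-(A.T+2) = 0 from by omega, y_eq A]
          by_cases hjl : j < 2*m
          · rw [flipc_ext_low _ _ _ hjl,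
              compF_ext_low A (low_flipc (plow' A le_rfl) hjl) _ _ hjl,
              ext_lt _ _ _ hjl]
            simp only [Bool.false_and, Bool.true_and, Bool.false_or]
            rw [second_disjunct A hjl, flipc_self]
          · by_cases hjm : j = 2*m
            · subst hjm
              rw [flipc_ext_M, compF_M, ext_M, ext_M1]
              simp
            · exact absurd (by omega) hj
        · -- region D : p'(t+1) = ext ((A.p s)∘sw) true false, s ∈ [1, A.T]
          have h4 : A.T+2 ≤ t := by omega
          set s := t+1 - (A.T+2) with hs
          have hs1 : 1 ≤ s := by omega
          have hsT : s ≤ A.T := by omega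
          rw [compC_hi A (by omega), show t - (A.T+2) = s - 1 from by omega] at hj
          rw [compP_hi A (by omega), ← hs]
          have hlow : Low (2*m) (fun k => A.p s (swp m k)) :=
            low_swp A.hm (plow' A hsT)
          by_cases hjl : j < 2*m
          · rw [flipc_ext_low _ _ _ hjl, compF_ext_low A (low_flipc hlow hjl) _ _ hjl,
              ext_lt _ _ _ hjl]
            simp only [Bool.false_and, Bool.true_and, Bool.false_or]
            have harg : (fun k => flipc (fun k' => A.p s (swp m k')) j (swp m k))
                = flipc (A.p s) (swp m j) := by
              funext k
              rw [flipc_swp]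
              simp [swp_swp]
            rw [harg]
            have hswj : swp m j ≠ A.c (s-1) := by
              intro hh
              apply hj
              rw [← hh, swp_swp]
            have hbd := A.bd (s-1) (swp m j) (by omega) hswj
            rw [show s-1+1 = s from by omega] at hbd
            rw [hbd]
            simp [flipc_self]
          · by_cases hjm : j = 2*m
            · subst hjm
              rw [flipc_ext_M, compF_M, ext_M, ext_M1]
              simp
            · have hjm1 : j = 2*m+1 := by omega
              subst hjm1
              rw [flipc_ext_M1, compF_M1, ext_M1, Dfun_ext, Dfun_p A hs1 hsT]
              simp
  np := by
    intro j
    by_cases hjh : 2*m+2 ≤ j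
    · exact compF_high A hjh _
    rw [compP_le A (Nat.zero_le _)]
    by_cases hjl : j < 2*m
    · rw [flipc_ext_low _ _ _ hjl,
        compF_ext_low A (low_flipc (plow' A (Nat.zero_le _)) hjl) _ _ hjl,
        ext_lt _ _ _ hjl]
      simp only [Bool.true_and, Bool.false_and, Bool.or_false]
      exact A.np j
    · by_cases hjm : j = 2*m
      · subst hjm
        rw [flipc_ext_M, compF_M, ext_M]
        simp
      · have hjm1 : j = 2*m+1 := by omega
        subst hjm1
        rw [flipc_ext_M1, compF_M1, ext_M1]
        simp
  fixy := by
    have hP : compP A (2*A.T+2) = ext (2*m) (A.p 0) true false := by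
      rw [compP_hi A (by omega), show 2*A.T+2-(A.T+2) = A.T from by omega, x_eq A]
    rw [hP]
    funext i
    by_cases hil : i < 2*m
    · rw [compF_ext_low A (plow' A (Nat.zero_le _)) _ _ hil, ext_lt _ _ _ hil, y_eq A]
      simp only [Bool.false_and, Bool.true_and, Bool.false_or]
      rw [A.fixy]
      have h4 := congrFun A.syx i
      simpa using h4
    · by_cases him : i = 2*m
      · subst him
        rw [compF_M, ext_M]
        simp
      · by_cases him1 : i = 2*m+1
        · subst him1
          rw [compF_M1, ext_M1]
          simp
        · rw [compF_high A (by omega)]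
  notle := by
    intro t h1 h2 hle
    by_cases hA : t ≤ A.T
    · refine A.notle t h1 hA (fun i => ?_)
      by_cases hil : i < 2*m
      · have hi := hle i
        rwa [compP_le A hA, compP_le A (Nat.zero_le _), ext_lt _ _ _ hil,
          ext_lt _ _ _ hil] at hi
      · rw [A.plow t hA i (by omega)]
        exact Bool.false_le _
    · have hi := hle (2*m)
      rw [compP_le A (Nat.zero_le _), ext_M] at hi
      by_cases hmid : t = A.T+1
      · rw [hmid, compP_mid A, ext_M] at hi
        rw [bool_le_iff] at hi
        exact absurd (hi rfl) (by simp)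
      · rw [compP_hi A (by omega), ext_M] at hi
        rw [bool_le_iff] at hi
        exact absurd (hi rfl) (by simp)
  lastdown := by
    have e1 : compP A (2*A.T+2) = ext (2*m) (fun k => A.p A.T (swp m k)) true false := by
      rw [compP_hi A (by omega), show 2*A.T+2-(A.T+2) = A.T from by omega]
    have e2 : compP A (2*A.T+2-1) = ext (2*m) (fun k => A.p (A.T-1) (swp m k)) true false := by
      rw [show 2*A.T+2-1 = 2*A.T+1 from by omega,
        compP_hi A (by have := two_le_T A; omega),
        show 2*A.T+1-(A.T+2) = A.T-1 from by have := two_le_T A; omega]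
    rw [e1, e2]
    intro i
    by_cases hil : i < 2*m
    · rw [ext_lt _ _ _ hil, ext_lt _ _ _ hil]
      exact A.lastdown (swp m i)
    · by_cases him : i = 2*m
      · subst him; rw [ext_M, ext_M]
      · by_cases him1 : i = 2*m+1
        · subst him1; rw [ext_M1, ext_M1]
        · rw [ext_high _ _ _ (by omega), ext_high _ _ _ (by omega)]
  syx := by
    have hP : compP A (2*A.T+2) = ext (2*m) (A.p 0) true false := by
      rw [compP_hi A (by omega), show 2*A.T+2-(A.T+2) = A.T from by omega, x_eq A]
    funext i
    show compP A (2*A.T+2) (swp (m+1) i) = compP A 0 i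
    rw [hP, compP_le A (Nat.zero_le _), swp_succ]
    by_cases hil : i < 2*m
    · rw [if_neg (by omega), if_neg (by omega), ext_lt _ _ _ hil, ext_lt _ _ _ hil]
    · by_cases him : i = 2*m
      · subst him
        rw [if_pos rfl, ext_M1, ext_M]
      · by_cases him1 : i = 2*m+1
        · subst him1
          rw [if_neg (by omega), if_pos rfl, ext_M, ext_M1]
        · rw [if_neg him, if_neg him1, ext_high _ _ _ (by omega), ext_high _ _ _ (by omega)]

end Comp3

section Chain
variable {m : ℕ} (A : Spec m)

lemma pred_unique {t : ℕ} (h : t+1 ≤ A.T) {u : S} (hs : stepR A.f u (A.p (t+1))) :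
    u = A.p t := by
  rw [stepR_iff] at hs
  obtain ⟨j, hv, hne⟩ := hs
  have hu : u = flipc (A.p (t+1)) j := by rw [hv, flipc_flipc]
  by_cases hc : j = A.c t
  · subst hc
    rw [hu, A.pstep t (by omega), flipc_flipc]
  · exfalso
    have hb := A.bd t j h hc
    rw [← hu] at hb
    exact hne hb

lemma chain_bound (Q : ℕ → S) (L : ℕ) (h0 : Q 0 = A.p 0) (hL : Q L = A.p A.T)
    (hstep : ∀ k, k < L → stepR A.f (Q k) (Q (k+1))) : A.T ≤ L := by
  by_contra hlt
  push_neg at hlt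
  have key : ∀ k, k ≤ L → Q (L - k) = A.p (A.T - k) := by
    intro k
    induction k with
    | zero => intro _; simpa using hL
    | succ n ih =>
      intro hk
      have hn := ih (by omega)
      have hs := hstep (L - (n+1)) (by omega)
      have he : L - (n+1) + 1 = L - n := by omega
      rw [he, hn] at hs
      have hTn : A.T - n = (A.T - (n+1)) + 1 := by omega
      rw [hTn] at hs
      exact pred_unique A (by omega) hs
  have hfin := key L le_rfl
  rw [Nat.sub_self, h0] at hfin
  exact A.notle (A.T - L) (by omega) (by omega) (le_of_eq hfin.symm)

end Chain

/-- the family of networks, for every `m ≥ 1` -/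
def specOf : (m : ℕ) → Spec (m+1)
  | 0 => base
  | (m+1) => comp (specOf m)

lemma bool_eq_not {a b : Bool} (h : a ≠ b) : a = !b := by
  cases a <;> cases b <;> simp_all

end BN
end

/-- There are monotone networks with fixed points reachable only by
exponentially long asynchronous paths. -/
theorem stmt16 : ∀ n : ℕ, 1 ≤ n → ∃ f : BState n → BState n, Monotone f ∧
    ∃ x y : BState n, f y = y ∧ (∃ L, asyncPath f x y L) ∧
      ∀ L, asyncPath f x y L → 2 ^ (n / 2) ≤ L := by
  intro n hn
  rcases eq_or_lt_of_le hn with h1 | h2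
  · -- the case n = 1
    subst h1
    refine ⟨fun _ _ => true, fun a b _ => le_refl _, fun _ => false, fun _ => true,
      by funext i; rfl, ⟨1, ?_⟩, ?_⟩
    · refine ⟨fun k => if k = 0 then (fun _ => false) else (fun _ => true), by simp, by simp, ?_⟩
      intro k hk
      have hk0 : k = 0 := by omega
      subst hk0
      refine ⟨0, by simp, ?_⟩
      funext i
      have hi : i = 0 := Subsingleton.elim _ _
      subst hi
      simp [Function.update]
    · rintro L ⟨p, hp0, hpL, _⟩
      rcases Nat.eq_zero_or_pos L with rfl | hL
      · rw [hp0] at hpL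
        exact absurd (congrFun hpL 0) (by simp)
      · simpa using (show 1 ≤ L from hL)
  · -- the case n ≥ 2
    obtain ⟨m', hm'⟩ : ∃ m', n / 2 = m' + 1 := ⟨n/2 - 1, by omega⟩
    set A := BN.specOf m' with hA
    have h2m : 2*(m'+1) ≤ n := by omega
    have hT2 : 2 ≤ 2 ^ (m'+1) := by
      calc 2 = 2^1 := by norm_num
      _ ≤ 2^(m'+1) := Nat.pow_le_pow_right (by norm_num) (by omega)
    set pad : BState n → BN.S := fun x k => if h : k < n then x ⟨k, h⟩ else false with hpad
    have padres : ∀ u : BN.S, BN.Low (2*(m'+1)) u →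
        pad (fun i : Fin n => u i.val) = u := by
      intro u hu
      funext k
      simp only [hpad]
      split_ifs with h
      · rfl
      · exact (hu k (by omega)).symm
    have padupd : ∀ (P : BState n) (i : Fin n) (v : Bool),
        pad (Function.update P i v) = Function.update (pad P) i.val v := by
      intro P i v
      funext k'
      rw [Function.update_apply]
      by_cases hk' : k' < n
      · simp only [hpad]
        rw [dif_pos hk', Function.update_apply]
        by_cases hik : k' = i.val
        · rw [if_pos (Fin.ext hik), if_pos hik]
        · rw [if_neg (fun hh => hik (congrArg Fin.val hh)), if_neg hik, dif_pos hk']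
      · have hik : k' ≠ i.val := by have := i.isLt; omega
        rw [if_neg hik]
        simp only [hpad]
        rw [dif_neg hk', dif_neg hk']
    have hplow : ∀ t, t ≤ A.T → BN.Low (2*(m'+1)) (A.p t) :=
      fun t ht i hi => A.plow t ht i hi
    have padmono : Monotone pad := by
      intro a b hab k
      simp only [hpad]
      split_ifs with h
      · exact hab _
      · exact le_refl false
    refine ⟨fun x i => A.f (pad x) i.val, ?_, fun i => A.p 0 i.val, fun i => A.p A.T i.val,
      ?_, ⟨A.T, ?_⟩, ?_⟩
    · -- monotone
      intro a b hab i
      exact A.mono (padmono hab) i.val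
    · -- fixed point
      funext i
      show A.f (pad (fun i : Fin n => A.p A.T i.val)) i.val = A.p A.T i.val
      rw [padres _ (hplow A.T le_rfl), A.fixy]
    · -- existence of a path of length T
      refine ⟨fun k i => A.p k i.val, rfl, rfl, ?_⟩
      intro k hk
      have hc := A.clow k hk
      have hpd : pad (fun i : Fin n => A.p k i.val) = A.p k := padres _ (hplow k (by omega))
      refine ⟨⟨A.c k, by omega⟩, ?_, ?_⟩
      · show A.f (pad (fun i : Fin n => A.p k i.val)) (A.c k) ≠ A.p k (A.c k)
        rw [hpd]
        exact A.edges k hk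
      · funext i
        rw [Function.update_apply]
        by_cases hi : i = (⟨A.c k, by omega⟩ : Fin n)
        · rw [if_pos hi]
          show A.p (k+1) i.val = A.f (pad (fun i : Fin n => A.p k i.val)) (A.c k)
          rw [hpd, A.pstep k hk]
          have hival : i.val = A.c k := by rw [hi]
          rw [hival, BN.flipc_self]
          exact (BN.bool_eq_not (A.edges k hk)).symm
        · rw [if_neg hi]
          show A.p (k+1) i.val = A.p k i.val
          rw [A.pstep k hk, BN.flipc_ne]
          intro hv
          exact hi (Fin.ext hv)
    · -- the lower bound
      rintro L ⟨P, hP0, hPL, hsteps⟩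
      have key : A.T ≤ L := by
        apply BN.chain_bound A (fun k => pad (P k)) L
        · show pad (P 0) = A.p 0
          rw [hP0]
          exact padres _ (hplow 0 (by omega))
        · show pad (P L) = A.p A.T
          rw [hPL]
          exact padres _ (hplow A.T le_rfl)
        · intro k hk
          obtain ⟨i, hne, hupd⟩ := hsteps k hk
          have hv : pad (P k) i.val = P k i := by
            simp only [hpad]
            rw [dif_pos i.isLt]
          refine ⟨i.val, ?_, ?_⟩
          · show A.f (pad (P k)) i.val ≠ pad (P k) i.val
            rw [hv]
            exact hne
          · show pad (P (k+1)) = Function.update (pad (P k)) i.val (A.f (pad (P k)) i.val)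
            rw [hupd, padupd]
      have hTval := A.hT
      rw [hm']
      omega
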